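/- Let H be a Hopf algebra and A a left H-module algebra and H-module coalgebra via an action ▷. If the Haar integral Λ ∈ A exists, then Λ is H-invariant: h ▷ Λ = ε(h)·Λ for all h ∈ H. -/

import Mathlib

open TensorProduct Coalgebra

noncomputable section

/-- Given an action `act : H →ₗ (A →ₗ A)`, the induced "diagonal" operator
`act2 act h = ∑ (h₍₁₎ ▷ ·) ⊗ (h₍₂₎ ▷ ·)` on `A ⊗ A`. -/
def act2 {H A : Type*} [Ring H] [Ring A] [HopfAlgebra ℂ H] [HopfAlgebra ℂ A]
    (act : H →ₗ[ℂ] A →ₗ[ℂ] A) : H →ₗ[ℂ] (A ⊗[ℂ] A →ₗ[ℂ] A ⊗[ℂ] A) :=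
  (TensorProduct.homTensorHomMap (RingHom.id ℂ) A A A A) ∘ₗ (TensorProduct.map act act) ∘ₗ
    (comul : H →ₗ[ℂ] H ⊗[ℂ] H)

/-- The counit composed with the antipode is the counit. -/
theorem counit_antipode_aux {H : Type*} [Ring H] [HopfAlgebra ℂ H] (h : H) :
    counit (R := ℂ) (HopfAlgebra.antipode (R := ℂ) h) = counit (R := ℂ) h := by
  have key : ∀ t : H ⊗[ℂ] H,
      counit (R := ℂ) (HopfAlgebra.antipode (R := ℂ)
        ((TensorProduct.rid ℂ H) ((counit (R := ℂ) : H →ₗ[ℂ] ℂ).lTensor H t)))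
      = counit (R := ℂ) (LinearMap.mul' ℂ H
        ((HopfAlgebra.antipode (R := ℂ) : H →ₗ[ℂ] H).rTensor H t)) := by
    intro t
    induction t using TensorProduct.induction_on with
    | zero => simp
    | tmul x y =>
        simp only [LinearMap.lTensor_tmul, TensorProduct.rid_tmul, map_smul,
          LinearMap.rTensor_tmul, LinearMap.mul'_apply, Bialgebra.counit_mul]
        simp [smul_eq_mul, mul_comm]
    | add u v hu hv => simp only [map_add, hu, hv]
  have h1 := key (comul (R := ℂ) h)
  rw [Coalgebra.lTensor_counit_comul, HopfAlgebra.mul_antipode_rTensor_comul_apply] at h1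
  simpa [Algebra.algebraMap_eq_smul_one] using h1

/-- Let `H` be a Hopf algebra and `A` a left `H`-module algebra and
`H`-module coalgebra via `▷`.  If the Haar integral `Λ ∈ A` exists, then `Λ` is
`H`-invariant: `h ▷ Λ = ε(h) • Λ` for all `h ∈ H`. -/
theorem stmt5 {H A : Type*} [Ring H] [Ring A] [HopfAlgebra ℂ H] [HopfAlgebra ℂ A]
    [FiniteDimensional ℂ H] [FiniteDimensional ℂ A]
    (act : H →ₗ[ℂ] A →ₗ[ℂ] A)
    -- `act` is a left action of the algebra `H`:
    (act_mul : ∀ (h k : H) (a : A), act (h * k) a = act h (act k a))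
    (act_one : ∀ a : A, act 1 a = a)
    -- `A` is an `H`-module algebra:
    (modalg_mul : ∀ (h : H) (a b : A),
      act h (a * b) = LinearMap.mul' ℂ A (act2 act h (a ⊗ₜ[ℂ] b)))
    (modalg_one : ∀ h : H, act h 1 = counit (R := ℂ) h • (1 : A))
    -- `A` is an `H`-module coalgebra:
    (modcoalg_comul : ∀ (h : H) (a : A),
      comul (R := ℂ) (act h a) = act2 act h (comul (R := ℂ) a))
    (modcoalg_counit : ∀ (h : H) (a : A),
      counit (R := ℂ) (act h a) = counit (R := ℂ) h * counit (R := ℂ) a)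
    -- the Haar integral of `A`:
    (Λ : A) (hidem : Λ * Λ = Λ)
    (hleft : ∀ a : A, a * Λ = counit (R := ℂ) a • Λ)
    (hright : ∀ a : A, Λ * a = counit (R := ℂ) a • Λ) :
    ∀ h : H, act h Λ = counit (R := ℂ) h • Λ := by
  intro h
  -- abbreviations
  set S : H →ₗ[ℂ] H := HopfAlgebra.antipode (R := ℂ) with hS
  set f : H →ₗ[ℂ] A := act.flip Λ with hf
  have hfapp : ∀ k : H, f k = act k Λ := fun k => rfl
  -- T' (x ⊗ y) = act x (act (S y) Λ)
  set T' : H ⊗[ℂ] H →ₗ[ℂ] A := f ∘ₗ (LinearMap.mul' ℂ H) ∘ₗ (S.lTensor H) with hT'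
  have hT'app : ∀ x y : H, T' (x ⊗ₜ[ℂ] y) = act x (f (S y)) := by
    intro x y
    simp only [hT', LinearMap.comp_apply, LinearMap.lTensor_tmul, LinearMap.mul'_apply,
      hfapp, act_mul]
  -- ψ k = ε k • Λ
  set ψ : H →ₗ[ℂ] A := T' ∘ₗ (comul : H →ₗ[ℂ] H ⊗[ℂ] H) with hψdef
  have hψ : ∀ k : H, ψ k = counit (R := ℂ) k • Λ := by
    intro k
    have : ψ k = f (LinearMap.mul' ℂ H ((S.lTensor H) (comul (R := ℂ) k))) := rfl
    rw [this, hS, HopfAlgebra.mul_antipode_lTensor_comul_apply,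
      Algebra.algebraMap_eq_smul_one, map_smul, hfapp, act_one]
  -- the central element
  set e : A := LinearMap.mul' ℂ A ((TensorProduct.map f ψ) (comul (R := ℂ) h)) with he
  -- Step 1 : e = f h * Λ
  have step1 : e = f h * Λ := by
    have key : ∀ t : H ⊗[ℂ] H,
        LinearMap.mul' ℂ A ((TensorProduct.map f ψ) t)
          = f ((TensorProduct.rid ℂ H) ((counit (R := ℂ) : H →ₗ[ℂ] ℂ).lTensor H t)) * Λ := by
      intro t
      induction t using TensorProduct.induction_on with
      | zero => simp
      | tmul x y =>
          simp only [TensorProduct.map_tmul, LinearMap.mul'_apply, hψ,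
            LinearMap.lTensor_tmul, TensorProduct.rid_tmul, map_smul]
          rw [mul_smul_comm, smul_mul_assoc]
      | add u v hu hv => simp only [map_add, hu, hv, add_mul]
    rw [he, key, Coalgebra.lTensor_counit_comul]
    simp
  -- Step 2 : e = ε(Λ) • f h
  have step2 : e = counit (R := ℂ) Λ • f h := by
    -- rewrite map f ψ via lTensor of comul
    have expand : ∀ t : H ⊗[ℂ] H,
        (TensorProduct.map f ψ) t
          = (TensorProduct.map f T') ((comul : H →ₗ[ℂ] H ⊗[ℂ] H).lTensor H t) := by
      intro t
      induction t using TensorProduct.induction_on with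
      | zero => simp
      | tmul x y => simp [hψdef]
      | add u v hu hv => simp only [map_add, hu, hv]
    -- main tensor computation
    have inner : ∀ (y : H) (v : H ⊗[ℂ] H),
        LinearMap.mul' ℂ A ((TensorProduct.map f T')
            ((TensorProduct.assoc ℂ H H H) (v ⊗ₜ[ℂ] y)))
          = LinearMap.mul' ℂ A ((TensorProduct.homTensorHomMap (RingHom.id ℂ) A A A A)
              ((TensorProduct.map act act) v) (Λ ⊗ₜ[ℂ] f (S y))) := by
      intro y v
      induction v using TensorProduct.induction_on with
      | zero =>
          rw [TensorProduct.zero_tmul, (TensorProduct.assoc ℂ H H H).map_zero]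
          simp
      | tmul p q =>
          simp only [TensorProduct.assoc_tmul, TensorProduct.map_tmul, hT'app,
            TensorProduct.homTensorHomMap_apply, LinearMap.mul'_apply, hfapp]
      | add u v hu hv =>
          rw [TensorProduct.add_tmul, (TensorProduct.assoc ℂ H H H).map_add]
          simp only [map_add, LinearMap.add_apply, hu, hv]
    have main2 : ∀ u : H ⊗[ℂ] H,
        LinearMap.mul' ℂ A ((TensorProduct.map f T')
            ((TensorProduct.assoc ℂ H H H)
              ((comul : H →ₗ[ℂ] H ⊗[ℂ] H).rTensor H u)))
          = counit (R := ℂ) Λ •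
              f ((TensorProduct.rid ℂ H) ((counit (R := ℂ) : H →ₗ[ℂ] ℂ).lTensor H u)) := by
      intro u
      induction u using TensorProduct.induction_on with
      | zero =>
          rw [map_zero, (TensorProduct.assoc ℂ H H H).map_zero]
          simp
      | tmul x y =>
          rw [LinearMap.rTensor_tmul, inner y (comul (R := ℂ) x)]
          have : LinearMap.mul' ℂ A ((TensorProduct.homTensorHomMap (RingHom.id ℂ) A A A A)
              ((TensorProduct.map act act) (comul (R := ℂ) x)) (Λ ⊗ₜ[ℂ] f (S y)))
              = act x (Λ * f (S y)) := by
            rw [modalg_mul]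
            rfl
          rw [this, hright, hfapp, modcoalg_counit, hS, counit_antipode_aux]
          simp only [map_smul, LinearMap.lTensor_tmul, TensorProduct.rid_tmul, hfapp,
            LinearMap.smul_apply]
          rw [smul_smul, mul_comm]
      | add u v hu hv =>
          rw [map_add, (TensorProduct.assoc ℂ H H H).map_add]
          simp only [map_add, hu, hv, smul_add]
    have coas := Coalgebra.coassoc_apply (R := ℂ) h
    rw [he, expand, ← coas, main2, Coalgebra.lTensor_counit_comul]
    simp
  -- combine
  have comb : counit (R := ℂ) Λ • f h
      = (counit (R := ℂ) h * counit (R := ℂ) Λ) • Λ := by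
    rw [← step2, step1, hleft, hfapp, modcoalg_counit]
  have hΛ : Λ = counit (R := ℂ) Λ • Λ := by rw [← hleft Λ, hidem]
  by_cases hz : counit (R := ℂ) Λ = 0
  · have : Λ = 0 := by rw [hΛ, hz, zero_smul]
    rw [this]
    simp
  · have := comb
    rw [mul_comm, mul_smul] at this
    have := smul_right_injective A hz this
    rw [← hfapp h, this]

end
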